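/- Fix an integer n ≥ 2. Let X be a unital C*-algebra with the approximate n-th root property. Then there exists a family {X_α : α ∈ A} of separable closed *-subalgebras of X, each containing the unit of X and each having the approximate n-th root property, which is directed by inclusion and such that every countable subset of X is contained in some X_α; in particular X = ⋃_{α∈A} X_α. -/
import Mathlib

universe u

/-- A unital C*-algebra has the approximate `n`-th root property if every element of
norm `≤ 1` can be approximated by `n`-th powers of elements of norm `≤ 1`. -/
def ApproxNthRootProperty (n : ℕ) (X : Type u) [CStarAlgebra X] : Prop :=
  ∀ x : X, ‖x‖ ≤ 1 → ∀ ε : ℝ, 0 < ε → ∃ b : X, ‖b‖ ≤ 1 ∧ ‖x - b ^ n‖ < ε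

open TopologicalSpace

set_option maxHeartbeats 1000000

section Aux

variable {X : Type u} [CStarAlgebra X]

lemma aux_countable_submonoid_closure {s : Set X} (hs : s.Countable) :
    (Submonoid.closure s : Set X).Countable := by
  rw [Submonoid.closure_eq_image_prod, ← Set.range_list_map_coe]
  have := hs.to_subtype
  exact (Set.countable_range _).image _

lemma aux_isSeparable_adjoin {s : Set X} (hs : s.Countable) :
    IsSeparable (StarAlgebra.adjoin ℂ s : Set X) := by
  have h1 : (StarAlgebra.adjoin ℂ s : Set X)
      = ((Submodule.span ℂ (Submonoid.closure (s ∪ star s)) : Submodule ℂ X) : Set X) := by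
    rw [← StarSubalgebra.coe_toSubalgebra, StarAlgebra.adjoin_toSubalgebra,
      ← Subalgebra.coe_toSubmodule, Algebra.adjoin_eq_span]
  have hstar : (star s).Countable := hs.preimage star_injective
  have h2 : IsSeparable ((Submonoid.closure (s ∪ star s) : Submonoid X) : Set X) :=
    (aux_countable_submonoid_closure (hs.union hstar)).isSeparable
  rw [h1]
  exact h2.span

/-- canonical rescaling of an element to the unit ball -/
noncomputable def scl (y : X) : X := (((max 1 ‖y‖)⁻¹ : ℝ) : ℂ) • y

lemma scl_norm (y : X) : ‖scl y‖ ≤ 1 := by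
  have hM1 : (1 : ℝ) ≤ max 1 ‖y‖ := le_max_left _ _
  have hM0 : (0 : ℝ) < max 1 ‖y‖ := lt_of_lt_of_le one_pos hM1
  rw [scl, norm_smul, Complex.norm_real, Real.norm_eq_abs,
    abs_of_pos (inv_pos.mpr hM0)]
  rw [inv_mul_le_iff₀ hM0]
  simpa using le_max_right 1 ‖y‖

lemma scl_dist {x : X} (y : X) (hx : ‖x‖ ≤ 1) : ‖y - scl y‖ ≤ ‖x - y‖ := by
  have hM1 : (1 : ℝ) ≤ max 1 ‖y‖ := le_max_left _ _
  have hM0 : (0 : ℝ) < max 1 ‖y‖ := lt_of_lt_of_le one_pos hM1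
  have h1 : y - scl y = ((1 - ((max 1 ‖y‖)⁻¹ : ℝ) : ℝ) : ℂ) • y := by
    rw [scl]
    push_cast
    rw [sub_smul, one_smul]
  have hinv : ((max 1 ‖y‖)⁻¹ : ℝ) ≤ 1 := by
    rw [inv_le_one₀ hM0]; exact hM1
  rw [h1, norm_smul, Complex.norm_real, Real.norm_eq_abs, abs_of_nonneg (by linarith)]
  rcases le_or_gt ‖y‖ 1 with hy | hy
  · rw [max_eq_left hy]
    simp [norm_nonneg]
  · rw [max_eq_right hy.le]
    have hy0 : (0 : ℝ) < ‖y‖ := lt_trans one_pos hy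
    have : (1 - ‖y‖⁻¹) * ‖y‖ = ‖y‖ - 1 := by field_simp
    rw [this]
    have h2 : ‖y‖ - ‖x‖ ≤ ‖x - y‖ := by
      rw [norm_sub_rev]; exact norm_sub_norm_le _ _
    linarith

lemma scl_mem {S : StarSubalgebra ℂ X} {y : X} (hy : y ∈ S) : scl y ∈ S := by
  rw [scl]
  exact SMulMemClass.smul_mem _ hy

lemma aux_step (n : ℕ) (hX : ApproxNthRootProperty n X) (C : Set X) (hC : C.Countable) :
    ∃ C' : Set X, C'.Countable ∧ C ⊆ C' ∧
      ∀ x ∈ closure (StarAlgebra.adjoin ℂ C : Set X), ‖x‖ ≤ 1 → ∀ ε : ℝ, 0 < ε →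
        ∃ b ∈ C', ‖b‖ ≤ 1 ∧ ‖x - b ^ n‖ < ε := by
  obtain ⟨c, hc_count, hc_sub⟩ := (aux_isSeparable_adjoin hC).closure
  choose b hb1 hb2 using fun (d : X) (k : ℕ) =>
    hX (scl d) (scl_norm d) (1 / (k + 1 : ℝ)) (by positivity)
  refine ⟨C ∪ ⋃ d ∈ c, ⋃ k : ℕ, {b d k}, ?_, Set.subset_union_left, ?_⟩
  · exact hC.union (hc_count.biUnion fun _ _ =>
      Set.countable_iUnion fun k => Set.countable_singleton _)
  · intro x hx hx1 ε hε
    obtain ⟨k, hk⟩ := exists_nat_one_div_lt (show (0 : ℝ) < ε / 3 by linarith)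
    have hxc := hc_sub hx
    rw [Metric.mem_closure_iff] at hxc
    obtain ⟨d, hd, hdist⟩ := hxc (1 / (k + 1 : ℝ)) (by positivity)
    rw [dist_eq_norm] at hdist
    refine ⟨b d k, Or.inr ?_, hb1 d k, ?_⟩
    · exact Set.mem_biUnion hd (Set.mem_iUnion.2 ⟨k, rfl⟩)
    · have htri : ‖x - (b d k) ^ n‖ ≤ ‖x - d‖ + ‖d - scl d‖ + ‖scl d - (b d k) ^ n‖ := by
        have : x - (b d k) ^ n = (x - d) + (d - scl d) + (scl d - (b d k) ^ n) := by abel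
        rw [this]
        exact norm_add₃_le
      have h1 : ‖d - scl d‖ ≤ ‖x - d‖ := scl_dist d hx1
      have h2 := hb2 d k
      linarith

lemma aux_main (n : ℕ) (hX : ApproxNthRootProperty n X) (C0 : Set X) (h0 : C0.Countable) :
    ∃ Y : StarSubalgebra ℂ X, C0 ⊆ Y ∧ IsClosed (Y : Set X) ∧ IsSeparable (Y : Set X) ∧
      ∀ x ∈ Y, ‖x‖ ≤ 1 → ∀ ε : ℝ, 0 < ε → ∃ b ∈ Y, ‖b‖ ≤ 1 ∧ ‖x - b ^ n‖ < ε := by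
  have hstep : ∀ p : {C : Set X // C.Countable}, ∃ q : {C : Set X // C.Countable},
      p.1 ⊆ q.1 ∧ ∀ x ∈ closure (StarAlgebra.adjoin ℂ p.1 : Set X), ‖x‖ ≤ 1 →
        ∀ ε : ℝ, 0 < ε → ∃ b ∈ q.1, ‖b‖ ≤ 1 ∧ ‖x - b ^ n‖ < ε := by
    intro p
    obtain ⟨C', h1, h2, h3⟩ := aux_step n hX p.1 p.2
    exact ⟨⟨C', h1⟩, h2, h3⟩
  choose G hG1 hG2 using hstep
  set F : ℕ → {C : Set X // C.Countable} := fun k => G^[k] ⟨C0, h0⟩ with hF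
  have hFsucc : ∀ k, F (k + 1) = G (F k) := fun k => Function.iterate_succ_apply' G k _
  have hFmono : Monotone fun k => (F k).1 := monotone_nat_of_le_succ fun k => by
    rw [hFsucc]; exact hG1 (F k)
  set U : Set X := ⋃ k, (F k).1 with hU
  set Y := (StarAlgebra.adjoin ℂ U).topologicalClosure with hY
  have hUcount : U.Countable := Set.countable_iUnion fun k => (F k).2
  have hUY : U ⊆ (Y : Set X) := fun z hz =>
    StarSubalgebra.le_topologicalClosure _ (StarAlgebra.subset_adjoin ℂ U hz)
  have hYset : (Y : Set X) = closure (StarAlgebra.adjoin ℂ U : Set X) :=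
    StarSubalgebra.topologicalClosure_coe _
  have hadj : (StarAlgebra.adjoin ℂ U : Set X)
      = ⋃ k, (StarAlgebra.adjoin ℂ (F k).1 : Set X) := by
    have h1 : ∀ s : Set X, (StarAlgebra.adjoin ℂ s : Set X)
        = (Algebra.adjoin ℂ (s ∪ star s) : Set X) := fun s => by
      rw [← StarSubalgebra.coe_toSubalgebra, StarAlgebra.adjoin_toSubalgebra]
    have hmono : Monotone fun k => Algebra.adjoin ℂ ((F k).1 ∪ star (F k).1) := by
      intro i j hij
      exact Algebra.adjoin_mono
        (Set.union_subset_union (hFmono hij) (Set.star_subset_star.2 (hFmono hij)))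
    have hdir : Directed (· ≤ ·) fun k => Algebra.adjoin ℂ ((F k).1 ∪ star (F k).1) :=
      hmono.directed_le
    have hUu : U ∪ star U = ⋃ k, ((F k).1 ∪ star (F k).1) := by
      rw [hU, Set.iUnion_star, ← Set.iUnion_union_distrib]
    rw [h1, hUu, Algebra.adjoin_iUnion, Subalgebra.coe_iSup_of_directed hdir]
    exact Set.iUnion_congr fun k => (h1 (F k).1).symm
  refine ⟨Y, ?_, StarSubalgebra.isClosed_topologicalClosure _, ?_, ?_⟩
  · exact fun x hx => hUY (Set.mem_iUnion.2 ⟨0, hx⟩)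
  · rw [hYset]
    exact (aux_isSeparable_adjoin hUcount).closure
  · intro x hx hx1 ε hε
    have hx' : x ∈ closure (⋃ k, (StarAlgebra.adjoin ℂ (F k).1 : Set X)) := by
      rw [← hadj, ← hYset]; exact hx
    rw [Metric.mem_closure_iff] at hx'
    obtain ⟨y, hy, hdist⟩ := hx' (ε / 4) (by linarith)
    rw [dist_eq_norm] at hdist
    obtain ⟨k, hyk⟩ := Set.mem_iUnion.1 hy
    have hy' : scl y ∈ closure (StarAlgebra.adjoin ℂ (F k).1 : Set X) :=
      subset_closure (scl_mem hyk)
    obtain ⟨b, hbmem, hb1, hb2⟩ := hG2 (F k) (scl y) hy' (scl_norm y) (ε / 4) (by linarith)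
    have hbU : b ∈ U := Set.mem_iUnion.2 ⟨k + 1, by rw [hFsucc]; exact hbmem⟩
    refine ⟨b, hUY hbU, hb1, ?_⟩
    have htri : ‖x - b ^ n‖ ≤ ‖x - y‖ + ‖y - scl y‖ + ‖scl y - b ^ n‖ := by
      have : x - b ^ n = (x - y) + (y - scl y) + (scl y - b ^ n) := by abel
      rw [this]
      exact norm_add₃_le
    have h1 : ‖y - scl y‖ ≤ ‖x - y‖ := scl_dist y hx1
    linarith

end Aux

/-- a unital C*-algebra with the approximate `n`-th root property is the
union of a directed family of separable closed unital *-subalgebras, each with the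
(intrinsic) approximate `n`-th root property, such that every countable subset of `X`
is contained in one of them. -/
theorem exists_directed_family_of_separable_subalgebras
    (n : ℕ) (hn : 2 ≤ n) (X : Type u) [CStarAlgebra X]
    (hX : ApproxNthRootProperty n X) :
    ∃ (A : Type u) (S : A → StarSubalgebra ℂ X),
      (∀ a : A, IsClosed (S a : Set X)) ∧
      (∀ a : A, TopologicalSpace.SeparableSpace (S a)) ∧
      (∀ (a : A) (x : X), x ∈ S a → ‖x‖ ≤ 1 → ∀ ε : ℝ, 0 < ε →
        ∃ b ∈ S a, ‖b‖ ≤ 1 ∧ ‖x - b ^ n‖ < ε) ∧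
      (∀ a b : A, ∃ c : A, S a ≤ S c ∧ S b ≤ S c) ∧
      (∀ C : Set X, C.Countable → ∃ a : A, C ⊆ S a) ∧
      (⋃ a : A, (S a : Set X)) = Set.univ := by
  choose Y hY1 hY2 hY3 hY4 using fun p : {C : Set X // C.Countable} =>
    aux_main n hX p.1 p.2
  refine ⟨{C : Set X // C.Countable}, Y, hY2, fun a => (hY3 a).separableSpace, ?_, ?_, ?_, ?_⟩
  · intro a x hx hx1 ε hε
    exact hY4 a x hx hx1 ε hε
  · intro a b
    obtain ⟨ca, hca_count, hca⟩ := hY3 a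
    obtain ⟨cb, hcb_count, hcb⟩ := hY3 b
    refine ⟨⟨ca ∪ cb, hca_count.union hcb_count⟩, ?_, ?_⟩
    · intro x hx
      have : x ∈ closure (ca ∪ cb) := closure_mono Set.subset_union_left (hca hx)
      have h2 : closure (ca ∪ cb) ⊆ (Y ⟨ca ∪ cb, hca_count.union hcb_count⟩ : Set X) :=
        closure_minimal (hY1 ⟨ca ∪ cb, hca_count.union hcb_count⟩) (hY2 _)
      exact h2 this
    · intro x hx
      have : x ∈ closure (ca ∪ cb) := closure_mono Set.subset_union_right (hcb hx)
      have h2 : closure (ca ∪ cb) ⊆ (Y ⟨ca ∪ cb, hca_count.union hcb_count⟩ : Set X) :=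
        closure_minimal (hY1 ⟨ca ∪ cb, hca_count.union hcb_count⟩) (hY2 _)
      exact h2 this
  · intro C hC
    exact ⟨⟨C, hC⟩, hY1 ⟨C, hC⟩⟩
  · rw [Set.eq_univ_iff_forall]
    intro x
    exact Set.mem_iUnion.2 ⟨⟨{x}, Set.countable_singleton x⟩, hY1 ⟨{x}, Set.countable_singleton x⟩ rfl⟩
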